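/- Let L ⊆ {1,…,n} and j ∉ L. If (μ − Kζ^L)_j ≤ 0 then ζ^{L∪{j}} = ζ^L; in particular ζ^{L∪{j}}_j = 0 and f(L∪{j}) = f(L). Consequently, if ζ^{L∪{j}}_j > 0 then (μ − Kζ^L)_j > 0. (Lemma 4.4) -/

import Mathlib

open Finset Matrix

noncomputable section

/-- The objective `l(w) = ⟨μ, w⟩ - (1/2) ⟨w, K w⟩`. -/
def obj {n : ℕ} (K : Matrix (Fin n) (Fin n) ℝ) (μ : Fin n → ℝ) (w : Fin n → ℝ) : ℝ :=
  μ ⬝ᵥ w - (1 / 2) * (w ⬝ᵥ (K *ᵥ w))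

/-- The feasible set `Ω_L = {w : w ≥ 0, w_j = 0 for j ∉ L}`. -/
def feas {n : ℕ} (L : Finset (Fin n)) : Set (Fin n → ℝ) :=
  {w | (∀ j, 0 ≤ w j) ∧ ∀ j ∉ L, w j = 0}

lemma sym_dot {n : ℕ} (K : Matrix (Fin n) (Fin n) ℝ) (hs : K.IsSymm) (u v : Fin n → ℝ) :
    u ⬝ᵥ (K *ᵥ v) = v ⬝ᵥ (K *ᵥ u) := by
  rw [Matrix.dotProduct_mulVec, ← Matrix.mulVec_transpose, hs.eq, dotProduct_comm]

lemma obj_add {n : ℕ} (K : Matrix (Fin n) (Fin n) ℝ) (hs : K.IsSymm) (μ z d : Fin n → ℝ) :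
    obj K μ (z + d) = obj K μ z + ((fun i => μ i - (K *ᵥ z) i) ⬝ᵥ d)
      - (1 / 2) * (d ⬝ᵥ (K *ᵥ d)) := by
  have hzd : z ⬝ᵥ (K *ᵥ d) = d ⬝ᵥ (K *ᵥ z) := sym_dot K hs z d
  have : (fun i => μ i - (K *ᵥ z) i) ⬝ᵥ d = μ ⬝ᵥ d - d ⬝ᵥ (K *ᵥ z) := by
    simp [dotProduct, mul_sub, sub_mul, Finset.sum_sub_distrib, mul_comm]
  rw [this]
  simp only [obj, Matrix.mulVec_add, dotProduct_add, add_dotProduct, hzd]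
  ring

lemma feas_segment {n : ℕ} (L : Finset (Fin n)) {z w : Fin n → ℝ}
    (hz : z ∈ feas L) (hw : w ∈ feas L) {t : ℝ} (h0 : 0 ≤ t) (h1 : t ≤ 1) :
    z + t • (w - z) ∈ feas L := by
  constructor
  · intro i
    have := hz.1 i; have := hw.1 i
    simp only [Pi.add_apply, Pi.smul_apply, Pi.sub_apply, smul_eq_mul]
    nlinarith
  · intro i hi
    simp [hz.2 i hi, hw.2 i hi]

lemma grad_le {n : ℕ} (K : Matrix (Fin n) (Fin n) ℝ) (hs : K.IsSymm) (hpd : K.PosDef)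
    (μ : Fin n → ℝ) (L : Finset (Fin n)) {z w : Fin n → ℝ}
    (hz : z ∈ feas L) (hmax : ∀ v ∈ feas L, obj K μ v ≤ obj K μ z) (hw : w ∈ feas L) :
    (fun i => μ i - (K *ᵥ z) i) ⬝ᵥ (w - z) ≤ 0 := by
  set g : ℝ := (fun i => μ i - (K *ᵥ z) i) ⬝ᵥ (w - z) with hg
  set q : ℝ := (w - z) ⬝ᵥ (K *ᵥ (w - z)) with hq
  have hqnn : 0 ≤ q := by
    simpa only [star_trivial, hq] using hpd.posSemidef.dotProduct_mulVec_nonneg (w - z)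
  have key : ∀ t : ℝ, 0 ≤ t → t ≤ 1 → t * g - (1 / 2) * (t ^ 2 * q) ≤ 0 := by
    intro t h0 h1
    have hmem := feas_segment L hz hw h0 h1
    have := hmax _ hmem
    rw [obj_add K hs μ z (t • (w - z))] at this
    have e1 : (fun i => μ i - (K *ᵥ z) i) ⬝ᵥ (t • (w - z)) = t * g := by
      rw [hg, dotProduct_smul]; simp
    have e2 : (t • (w - z)) ⬝ᵥ (K *ᵥ (t • (w - z))) = t ^ 2 * q := by
      rw [Matrix.mulVec_smul, dotProduct_smul, smul_dotProduct, hq]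
      simp; ring
    rw [e1, e2] at this
    linarith
  by_contra hgt
  push_neg at hgt
  rcases eq_or_lt_of_le hqnn with hq0 | hqpos
  · have := key 1 zero_le_one le_rfl
    nlinarith
  · set t := min 1 (g / q) with ht
    have ht0 : 0 < t := lt_min one_pos (div_pos hgt hqpos)
    have ht1 : t ≤ 1 := min_le_left _ _
    have htq : t * q ≤ g := by
      have h2 : t ≤ g / q := min_le_right _ _
      calc t * q ≤ (g / q) * q := by nlinarith
        _ = g := by field_simp
    have := key t ht0.le ht1
    nlinarith [mul_pos ht0 hgt]

theorem nonpos_gradient_no_change (n : ℕ) (hn : 1 ≤ n)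
    (K : Matrix (Fin n) (Fin n) ℝ) (hsymm : K.IsSymm) (hpd : K.PosDef)
    (μ : Fin n → ℝ)
    (ζ : Finset (Fin n) → Fin n → ℝ)
    (hζ : ∀ L : Finset (Fin n),
      ζ L ∈ feas L ∧ ∀ w ∈ feas L, obj K μ w ≤ obj K μ (ζ L))
    (f : Finset (Fin n) → ℝ) (hf : ∀ L : Finset (Fin n), f L = obj K μ (ζ L))
    (L : Finset (Fin n)) (j : Fin n) (hj : j ∉ L) :
    (μ j - (K *ᵥ ζ L) j ≤ 0 →
      ζ (insert j L) = ζ L ∧ ζ (insert j L) j = 0 ∧ f (insert j L) = f L) ∧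
    (0 < ζ (insert j L) j → 0 < μ j - (K *ᵥ ζ L) j) := by
  obtain ⟨hzfeas, hzmax⟩ := hζ L
  obtain ⟨hz'feas, hz'max⟩ := hζ (insert j L)
  have hζLj : ζ L j = 0 := hzfeas.2 j hj
  have hsub : feas L ⊆ feas (insert j L) := by
    intro w hw
    exact ⟨hw.1, fun i hi => hw.2 i (fun h => hi (Finset.mem_insert_of_mem h))⟩
  have main : μ j - (K *ᵥ ζ L) j ≤ 0 → ζ (insert j L) = ζ L := by
    intro hgrad
    -- Step A: ζ L maximizes over feas (insert j L)
    have stepA : ∀ w ∈ feas (insert j L), obj K μ w ≤ obj K μ (ζ L) := by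
      intro w hw
      set w' := Function.update w j 0 with hw'
      have hw'feas : w' ∈ feas L := by
        constructor
        · intro i
          rcases eq_or_ne i j with rfl | hij
          · simp [hw']
          · simpa [hw', Function.update_of_ne hij] using hw.1 i
        · intro i hi
          rcases eq_or_ne i j with rfl | hij
          · simp [hw']
          · rw [hw', Function.update_of_ne hij]
            exact hw.2 i (by simp [hij, hi])
      have hsplit : w = w' + Pi.single j (w j) := by
        funext i
        rcases eq_or_ne i j with rfl | hij
        · simp [hw']
        · simp [hw', Function.update_of_ne hij, Pi.single_eq_of_ne hij]
      have g'le : (fun i => μ i - (K *ᵥ ζ L) i) ⬝ᵥ (w' - ζ L) ≤ 0 :=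
        grad_le K hsymm hpd μ L hzfeas hzmax hw'feas
      have gle : (fun i => μ i - (K *ᵥ ζ L) i) ⬝ᵥ (w - ζ L) ≤ 0 := by
        have hwj : (w' - ζ L) + Pi.single j (w j) = w - ζ L := by
          funext i
          rcases eq_or_ne i j with rfl | hij
          · simp [hw', hζLj]
          · simp [hw', Function.update_of_ne hij, Pi.single_eq_of_ne hij]
        rw [← hwj, dotProduct_add, dotProduct_single]
        have : 0 ≤ w j := hw.1 j
        nlinarith
      have qnn : 0 ≤ (w - ζ L) ⬝ᵥ (K *ᵥ (w - ζ L)) := by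
        have := hpd.posSemidef.dotProduct_mulVec_nonneg (w - ζ L); simpa using this
      have : obj K μ w = obj K μ (ζ L + (w - ζ L)) := by ring_nf
      rw [this, obj_add K hsymm μ (ζ L) (w - ζ L)]
      linarith
    -- Step B: uniqueness via strict concavity
    have heq : obj K μ (ζ (insert j L)) = obj K μ (ζ L) :=
      le_antisymm (stepA _ hz'feas) (hz'max _ (hsub hzfeas))
    set d := ζ (insert j L) - ζ L with hd
    set g : ℝ := (fun i => μ i - (K *ᵥ ζ L) i) ⬝ᵥ d with hg
    set q : ℝ := d ⬝ᵥ (K *ᵥ d) with hq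
    have hexp : obj K μ (ζ (insert j L)) = obj K μ (ζ L) + g - (1 / 2) * q := by
      have : ζ (insert j L) = ζ L + d := by rw [hd]; ring_nf
      rw [this, obj_add K hsymm μ (ζ L) d]
    have hgq : g = (1 / 2) * q := by rw [hexp] at heq; linarith
    have hmid : ζ L + (1/2 : ℝ) • d ∈ feas (insert j L) :=
      feas_segment (insert j L) (hsub hzfeas) hz'feas (by norm_num) (by norm_num)
    have hmidexp : obj K μ (ζ L + (1/2 : ℝ) • d)
        = obj K μ (ζ L) + (1/2) * g - (1/2) * ((1/4) * q) := by
      rw [obj_add K hsymm μ (ζ L) ((1/2 : ℝ) • d)]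
      have e1 : (fun i => μ i - (K *ᵥ ζ L) i) ⬝ᵥ ((1/2 : ℝ) • d) = (1/2) * g := by
        rw [hg, dotProduct_smul]; simp
      have e2 : ((1/2 : ℝ) • d) ⬝ᵥ (K *ᵥ ((1/2 : ℝ) • d)) = (1/4) * q := by
        rw [Matrix.mulVec_smul, dotProduct_smul, smul_dotProduct, hq]
        simp; ring
      rw [e1, e2]
    have hmidle := hz'max _ hmid
    have hqle : q ≤ 0 := by
      rw [hmidexp, heq] at hmidle; linarith
    have hd0 : d = 0 := by
      by_contra hd0
      have := hpd.dotProduct_mulVec_pos hd0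
      simp only [star_trivial] at this
      rw [← hq] at this
      linarith
    have : ζ (insert j L) = ζ L := by
      have := sub_eq_zero.mp hd0
      exact this
    exact this
  constructor
  · intro hgrad
    have h1 := main hgrad
    refine ⟨h1, by rw [h1, hζLj], ?_⟩
    rw [hf, hf, h1]
  · intro hpos
    by_contra hle
    push_neg at hle
    have h1 := main hle
    rw [h1, hζLj] at hpos
    exact lt_irrefl _ hpos
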